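/- Let A be a group with subgroup C, and let A*_C = ⟨A, s | s⁻¹cs = c for all c ∈ C⟩ be the corresponding HNN extension. Then the homomorphism from the double G = {A * Ā ; C = C̄} of A along C to A*_C, which sends each a in the first copy A to a ∈ A*_C and each ā in the second copy Ā to s⁻¹as ∈ A*_C, is injective. In particular, A*_C contains an isomorphic copy of the double of A along C, namely the subgroup generated by A and s⁻¹As. -/

import Mathlib

open Monoid HNNExtension SemidirectProduct

section Aux

variable {A : Type*} [Group A] (C : Subgroup A)

/-- The swap homomorphism on the double. -/
private def swapHom : PushoutI (fun _ : Bool => C.subtype) →* PushoutI (fun _ : Bool => C.subtype) :=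
  PushoutI.lift (fun i => PushoutI.of (φ := fun _ : Bool => C.subtype) (!i))
    (PushoutI.base _) (fun _ => PushoutI.of_comp_eq_base _)

private lemma swapHom_of (i : Bool) (x : A) :
    swapHom C (PushoutI.of (φ := fun _ : Bool => C.subtype) i x) =
      PushoutI.of (φ := fun _ : Bool => C.subtype) (!i) x :=
  PushoutI.lift_of _ _ _ _

private lemma swapHom_comp_swapHom :
    (swapHom C).comp (swapHom C) = MonoidHom.id _ := by
  ext i x
  simp [swapHom_of]

/-- The swap automorphism on the double. -/
private def swapAut : MulAut (PushoutI (fun _ : Bool => C.subtype)) :=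
  MonoidHom.toMulEquiv (swapHom C) (swapHom C)
    (swapHom_comp_swapHom C) (swapHom_comp_swapHom C)

private lemma swapAut_of (i : Bool) (x : A) :
    swapAut C (PushoutI.of (φ := fun _ : Bool => C.subtype) i x) =
      PushoutI.of (φ := fun _ : Bool => C.subtype) (!i) x :=
  swapHom_of C i x

private lemma swapAut_inv_of (i : Bool) (x : A) :
    (swapAut C)⁻¹ (PushoutI.of (φ := fun _ : Bool => C.subtype) i x) =
      PushoutI.of (φ := fun _ : Bool => C.subtype) (!i) x := by
  rw [MulAut.inv_def, MulEquiv.symm_apply_eq, swapAut_of, Bool.not_not]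

/-- The action of `ℤ` on the double via the swap. -/
private def zact : Multiplicative ℤ →* MulAut (PushoutI (fun _ : Bool => C.subtype)) :=
  zpowersHom _ (swapAut C)

/-- The retraction-like homomorphism from the HNN extension to the semidirect product. -/
private noncomputable def retr :
    HNNExtension A C C (MulEquiv.refl C) →*
      PushoutI (fun _ : Bool => C.subtype) ⋊[zact C] Multiplicative ℤ :=
  HNNExtension.lift (SemidirectProduct.inl.comp (PushoutI.of (φ := fun _ : Bool => C.subtype) false))
    (SemidirectProduct.inr (Multiplicative.ofAdd 1))
    (by
      intro c
      have hbase : ∀ j : ℤ, (swapAut C ^ j) (PushoutI.of (φ := fun _ : Bool => C.subtype) false (c : A)) =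
          PushoutI.of (φ := fun _ : Bool => C.subtype) false (c : A) := by
        intro j
        have h1 : PushoutI.of (φ := fun _ : Bool => C.subtype) false (c : A) =
            PushoutI.base (fun _ : Bool => C.subtype) c :=
          PushoutI.of_apply_eq_base _ _ c
        have h2 : (swapAut C) (PushoutI.base (fun _ : Bool => C.subtype) c) =
            PushoutI.base (fun _ : Bool => C.subtype) c := by
          show swapHom C (PushoutI.base (fun _ : Bool => C.subtype) c) = _
          exact PushoutI.lift_base _ _ _ c
        rw [h1]
        induction j using Int.induction_on with
        | zero => simp
        | succ k ih => rw [zpow_add, zpow_one, MulAut.mul_apply, h2, ih]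
        | pred k ih =>
            have hneg : (swapAut C ^ (-1 : ℤ))
                (PushoutI.base (fun _ : Bool => C.subtype) c) =
                PushoutI.base (fun _ : Bool => C.subtype) c := by
              rw [zpow_neg, zpow_one, MulAut.inv_def]
              exact (MulEquiv.symm_apply_eq _).mpr h2.symm
            rw [sub_eq_add_neg, zpow_add, MulAut.mul_apply, hneg, ih]
      simp only [MonoidHom.comp_apply, MulEquiv.refl_apply]
      have h3 := inl_aut (φ := zact C) (Multiplicative.ofAdd 1)
        (PushoutI.of (φ := fun _ : Bool => C.subtype) false (c : A))
      have h4 : ((zact C) (Multiplicative.ofAdd 1))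
          (PushoutI.of (φ := fun _ : Bool => C.subtype) false (c : A)) =
          PushoutI.of (φ := fun _ : Bool => C.subtype) false (c : A) := by
        simpa [zact] using hbase 1
      rw [h4, map_inv, eq_comm, mul_inv_eq_iff_eq_mul] at h3
      exact h3)

private lemma retr_of (x : A) :
    retr C (HNNExtension.of x) =
      SemidirectProduct.inl (PushoutI.of (φ := fun _ : Bool => C.subtype) false x) :=
  HNNExtension.lift_of _ _ _ _

private lemma retr_t :
    retr C (HNNExtension.t : HNNExtension A C C (MulEquiv.refl C)) =
      SemidirectProduct.inr (Multiplicative.ofAdd 1) :=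
  HNNExtension.lift_t _ _ _

end Aux

/-- Let `A` be a group with subgroup `C` and let `A*_C` be the HNN extension
`⟨A, s | s⁻¹cs = c, ∀ c ∈ C⟩`. The homomorphism from the double `G = {A * Ā ; C = C̄}`
(formalized as the pushout of two copies of `C ↪ A`) to `A*_C` sending each `a` in the first
copy of `A` to `a` and each `ā` in the second copy to `s⁻¹as` is injective; its image is the
subgroup generated by `A` and `s⁻¹As`. -/
theorem double_embeds_in_hnn
    (A : Type*) [Group A] (C : Subgroup A)
    (f : Monoid.PushoutI (fun _ : Bool => C.subtype) →* HNNExtension A C C (MulEquiv.refl C))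
    (hf₁ : ∀ x : A, f (Monoid.PushoutI.of (φ := fun _ : Bool => C.subtype) false x) =
      HNNExtension.of x)
    (hf₂ : ∀ x : A, f (Monoid.PushoutI.of (φ := fun _ : Bool => C.subtype) true x) =
      (HNNExtension.t : HNNExtension A C C (MulEquiv.refl C))⁻¹ * HNNExtension.of x *
        HNNExtension.t) :
    Function.Injective f ∧
    f.range = Subgroup.closure
      (Set.range (HNNExtension.of : A →* HNNExtension A C C (MulEquiv.refl C)) ∪
        Set.range (fun x : A =>
          (HNNExtension.t : HNNExtension A C C (MulEquiv.refl C))⁻¹ * HNNExtension.of x *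
            HNNExtension.t)) := by
  have key : (retr C).comp f = SemidirectProduct.inl := by
    apply PushoutI.hom_ext_nonempty
    intro i
    refine MonoidHom.ext fun x => ?_
    cases i with
    | false =>
        simp only [MonoidHom.comp_apply, hf₁, retr_of]
    | true =>
        simp only [MonoidHom.comp_apply, hf₂]
        rw [map_mul, map_mul, map_inv, retr_t, retr_of, ← map_inv]
        have h2 := inl_aut_inv (φ := zact C) (Multiplicative.ofAdd 1)
          (PushoutI.of (φ := fun _ : Bool => C.subtype) false x)
        rw [← h2]
        have h1 : ((zact C (Multiplicative.ofAdd 1))⁻¹)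
            (PushoutI.of (φ := fun _ : Bool => C.subtype) false x) =
            PushoutI.of (φ := fun _ : Bool => C.subtype) true x := by
          have h0 : zact C (Multiplicative.ofAdd 1) = swapAut C := by simp [zact]
          rw [h0]
          exact swapAut_inv_of C false x
        rw [h1]
  constructor
  · have hinj : Function.Injective ((retr C) ∘ f) := by
      have : ⇑((retr C).comp f) = ⇑(retr C) ∘ ⇑f := rfl
      rw [← this, key]
      exact SemidirectProduct.inl_injective
    exact hinj.of_comp
  · apply le_antisymm
    · rintro _ ⟨d, rfl⟩
      induction d using PushoutI.induction_on with
      | of i g =>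
          cases i with
          | false =>
              rw [hf₁]
              exact Subgroup.subset_closure (Or.inl ⟨g, rfl⟩)
          | true =>
              rw [hf₂]
              exact Subgroup.subset_closure (Or.inr ⟨g, rfl⟩)
      | base h =>
          rw [← PushoutI.of_apply_eq_base (fun _ : Bool => C.subtype) false h, hf₁]
          exact Subgroup.subset_closure (Or.inl ⟨_, rfl⟩)
      | mul x y hx hy =>
          rw [map_mul]
          exact mul_mem hx hy
    · rw [Subgroup.closure_le]
      rintro _ (⟨x, rfl⟩ | ⟨x, rfl⟩)
      · exact ⟨PushoutI.of (φ := fun _ : Bool => C.subtype) false x, hf₁ x⟩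
      · exact ⟨PushoutI.of (φ := fun _ : Bool => C.subtype) true x, hf₂ x⟩
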